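/- Let a, b, c, d be positive reals with a ≥ b, c ≥ d, a ≥ c, and a > b + c + d. Then for all real θ, φ, the quantity F(θ,φ) = a^2 e^{-iθ} + 2ab + b^2 e^{iθ} + c^2 e^{-iφ} + 2cd + d^2 e^{iφ} is nonzero. -/

import Mathlib

open Complex

/-- The function `F(θ,φ) = a²e^{-iθ} + 2ab + b²e^{iθ} + c²e^{-iφ} + 2cd + d²e^{iφ}`. -/
noncomputable def Fdimer (a b c d θ φ : ℝ) : ℂ :=
  a ^ 2 * Complex.exp (-θ * Complex.I) + 2 * a * b +
    b ^ 2 * Complex.exp (θ * Complex.I) +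
  c ^ 2 * Complex.exp (-φ * Complex.I) + 2 * c * d +
    d ^ 2 * Complex.exp (φ * Complex.I)

/-- If `a > b + c + d` (with `a ≥ b`, `c ≥ d`, `a ≥ c`), then `F(θ,φ)` has no
zeros on the torus. -/
theorem F_ne_zero_of_dominant (a b c d : ℝ)
    (ha : 0 < a) (hb : 0 < b) (hc : 0 < c) (hd : 0 < d)
    (hab : b ≤ a) (hcd : d ≤ c) (hac : c ≤ a)
    (hdom : b + c + d < a) :
    ∀ θ φ : ℝ, Fdimer a b c d θ φ ≠ 0 := by
  intro θ φ
  set z : ℂ := Complex.exp ((θ / 2 : ℝ) * Complex.I) with hzdef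
  set w : ℂ := Complex.exp ((φ / 2 : ℝ) * Complex.I) with hwdef
  have hz1 : ‖z‖ = 1 := Complex.norm_exp_ofReal_mul_I _
  have hw1 : ‖w‖ = 1 := Complex.norm_exp_ofReal_mul_I _
  have hz0 : z ≠ 0 := Complex.exp_ne_zero _
  have hw0 : w ≠ 0 := Complex.exp_ne_zero _
  have hz2 : Complex.exp ((θ : ℂ) * Complex.I) = z ^ 2 := by
    rw [hzdef, sq, ← Complex.exp_add]
    congr 1
    push_cast
    ring
  have hw2 : Complex.exp ((φ : ℂ) * Complex.I) = w ^ 2 := by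
    rw [hwdef, sq, ← Complex.exp_add]
    congr 1
    push_cast
    ring
  have hz2' : Complex.exp (-(θ : ℂ) * Complex.I) = (z⁻¹) ^ 2 := by
    rw [show -(θ : ℂ) * Complex.I = -((θ : ℂ) * Complex.I) by ring,
      Complex.exp_neg, hz2, inv_pow]
  have hw2' : Complex.exp (-(φ : ℂ) * Complex.I) = (w⁻¹) ^ 2 := by
    rw [show -(φ : ℂ) * Complex.I = -((φ : ℂ) * Complex.I) by ring,
      Complex.exp_neg, hw2, inv_pow]
  set u : ℂ := a * z⁻¹ + b * z with hu
  set v : ℂ := c * w⁻¹ + d * w with hv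
  have hF : Fdimer a b c d θ φ = (u + Complex.I * v) * (u - Complex.I * v) := by
    have hI : (u + Complex.I * v) * (u - Complex.I * v) = u ^ 2 - Complex.I ^ 2 * v ^ 2 := by
      ring
    rw [hI, Complex.I_sq, hu, hv]
    unfold Fdimer
    rw [hz2, hw2, hz2', hw2']
    field_simp
    ring
  have habs : ∀ x : ℂ, ‖x‖ = 1 → ∀ s t : ℝ, 0 < s → 0 < t →
      s - t ≤ ‖s * x⁻¹ + t * x‖ ∧ ‖s * x⁻¹ + t * x‖ ≤ s + t := by
    intro x hx s t hs ht
    have hxi : ‖x⁻¹‖ = 1 := by rw [norm_inv, hx]; norm_num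
    constructor
    · calc s - t = ‖s * x⁻¹‖ - ‖t * x‖ := by
            rw [norm_mul, norm_mul, hx, hxi, Complex.norm_real, Complex.norm_real, Real.norm_eq_abs, Real.norm_eq_abs,
              abs_of_pos hs, abs_of_pos ht]; ring
        _ ≤ ‖s * x⁻¹ + t * x‖ := by
            have h := norm_add_le (s * x⁻¹ + t * x) (-(t * x))
            rw [add_neg_cancel_right, norm_neg] at h
            linarith
    · calc ‖s * x⁻¹ + t * x‖ ≤ ‖s * x⁻¹‖ + ‖t * x‖ :=
          norm_add_le _ _
        _ = s + t := by
            rw [norm_mul, norm_mul, hx, hxi, Complex.norm_real, Complex.norm_real, Real.norm_eq_abs, Real.norm_eq_abs,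
              abs_of_pos hs, abs_of_pos ht]; ring
  obtain ⟨hu1, _⟩ := habs z hz1 a b ha hb
  obtain ⟨_, hv2⟩ := habs w hw1 c d hc hd
  have hIv : ‖Complex.I * v‖ ≤ c + d := by
    rw [norm_mul, Complex.norm_I, one_mul]; exact hv2
  have key : ∀ e : ℂ, ‖e‖ ≤ c + d → u + e ≠ 0 := by
    intro e he h0
    have : ‖u‖ = ‖e‖ := by
      have : u = -e := by linear_combination h0
      rw [this, norm_neg]
    have h1 : a - b ≤ c + d := by
      calc a - b ≤ ‖u‖ := hu1
        _ = ‖e‖ := this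
        _ ≤ c + d := he
    linarith
  rw [hF]
  apply mul_ne_zero
  · exact key _ hIv
  · have : ‖-(Complex.I * v)‖ ≤ c + d := by rwa [norm_neg]
    simpa [sub_eq_add_neg] using key _ this
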